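/- Let C ⊆ F_q^n be an MDS code with parameters (n, M, d)_q, i.e., |C| = M = q^{n−d+1} ≥ 2 and minimum distance d. Then the minimum-distance graph G(C) is connected. -/

import Mathlib

/-- The minimum distance of a code `C ⊆ F^n`. -/
noncomputable def minDist {F : Type*} [Fintype F] [DecidableEq F] {n : ℕ}
    (C : Set (Fin n → F)) : ℕ :=
  sInf {d : ℕ | ∃ x ∈ C, ∃ y ∈ C, x ≠ y ∧ hammingDist x y = d}

/-- The minimum-distance graph `G(C)`. -/
noncomputable def mdGraph {F : Type*} [Fintype F] [DecidableEq F] {n : ℕ}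
    (C : Set (Fin n → F)) : SimpleGraph C where
  Adj x y := x ≠ y ∧ hammingDist (x : Fin n → F) (y : Fin n → F) = minDist C
  symm := by
    constructor
    rintro x y ⟨hxy, hd⟩
    exact ⟨hxy.symm, by rwa [hammingDist_comm]⟩
  loopless := by
    constructor
    rintro x ⟨hxx, -⟩
    exact hxx rfl

open Finset

section Aux

variable {F : Type*} [Fintype F] [DecidableEq F] {n : ℕ}

lemma minDist_le_hammingDist {C : Set (Fin n → F)} {x y : Fin n → F}
    (hx : x ∈ C) (hy : y ∈ C) (hne : x ≠ y) :
    minDist C ≤ hammingDist x y :=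
  Nat.sInf_le ⟨x, hx, y, hy, hne, rfl⟩

lemma hammingDist_le_of_agree {x y : Fin n → F} {A : Finset (Fin n)}
    (h : ∀ i ∈ A, x i = y i) : hammingDist x y ≤ n - A.card := by
  have hsub : (Finset.univ.filter fun i => x i ≠ y i) ⊆ Aᶜ := by
    intro i hi
    simp only [mem_filter] at hi
    simp only [mem_compl]
    exact fun hA => hi.2 (h i hA)
  calc hammingDist x y = (Finset.univ.filter fun i => x i ≠ y i).card := rfl
    _ ≤ Aᶜ.card := Finset.card_le_card hsub
    _ = n - A.card := by rw [Finset.card_compl, Fintype.card_fin]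

lemma eq_of_agree_on_big {d : ℕ} (hd : 1 ≤ d) (hdn : d ≤ n)
    {C : Set (Fin n → F)} (hmin : minDist C = d)
    {x y : Fin n → F} (hx : x ∈ C) (hy : y ∈ C) {S : Finset (Fin n)}
    (hS : n - d + 1 ≤ S.card) (h : ∀ i ∈ S, x i = y i) : x = y := by
  by_contra hne
  have h1 : d ≤ hammingDist x y := hmin ▸ minDist_le_hammingDist hx hy hne
  have h2 : hammingDist x y ≤ n - S.card := hammingDist_le_of_agree h
  have h3 : S.card ≤ n := by
    simpa using Finset.card_le_card (Finset.subset_univ S)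
  omega

lemma exists_codeword_matching {d : ℕ} (hd : 1 ≤ d) (hdn : d ≤ n)
    {C : Set (Fin n → F)} (hmin : minDist C = d)
    (hMDS : Nat.card C = Fintype.card F ^ (n - d + 1))
    {S : Finset (Fin n)} (hS : S.card = n - d + 1) (v : Fin n → F) :
    ∃ z ∈ C, ∀ i ∈ S, z i = v i := by
  classical
  haveI : Fintype C := Fintype.ofFinite C
  let f : C → (↥S → F) := fun c i => (c : Fin n → F) i
  have hinj : Function.Injective f := by
    intro a b hab
    apply Subtype.ext
    refine eq_of_agree_on_big hd hdn hmin a.2 b.2 (le_of_eq hS.symm) ?_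
    intro i hi
    exact congrFun hab ⟨i, hi⟩
  have hcard : Fintype.card C = Fintype.card (↥S → F) := by
    rw [← Nat.card_eq_fintype_card, hMDS]
    simp [Fintype.card_fun, hS]
  have hbij : Function.Bijective f :=
    (Fintype.bijective_iff_injective_and_card f).2 ⟨hinj, hcard⟩
  obtain ⟨c, hc⟩ := hbij.2 (fun i => v i)
  exact ⟨c, c.2, fun i hi => congrFun hc ⟨i, hi⟩⟩

end Aux

/-- The minimum-distance graph of an `(n, M, d)_q` MDS code with
`M = q^{n−d+1} ≥ 2` codewords is connected. -/
theorem mdGraph_connected_of_MDS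
    {F : Type*} [Field F] [Fintype F] [DecidableEq F]
    {n d : ℕ} (hd : 1 ≤ d) (hdn : d ≤ n)
    (C : Set (Fin n → F)) (h2 : 2 ≤ Nat.card C)
    (hmin : minDist C = d)
    (hMDS : Nat.card C = Fintype.card F ^ (n - d + 1)) :
    (mdGraph C).Connected := by
  classical
  have hne : Nonempty C := by
    have hpos : 0 < Nat.card C := by omega
    exact (Nat.card_pos_iff.mp hpos).1
  have key : ∀ e : ℕ, ∀ x y : C,
      hammingDist (x : Fin n → F) (y : Fin n → F) ≤ e → (mdGraph C).Reachable x y := by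
    intro e
    induction e with
    | zero =>
      intro x y h
      have hxy : (x : Fin n → F) = y := hammingDist_eq_zero.mp (Nat.le_zero.mp h)
      have : x = y := Subtype.ext hxy
      rw [this]
    | succ e ih =>
      intro x y h
      by_cases hxy : x = y
      · rw [hxy]
      have hxy' : (x : Fin n → F) ≠ (y : Fin n → F) := fun h' => hxy (Subtype.ext h')
      have hde : d ≤ hammingDist (x : Fin n → F) (y : Fin n → F) :=
        hmin ▸ minDist_le_hammingDist x.2 y.2 hxy'
      rcases eq_or_lt_of_le hde with heq | hlt
      · exact SimpleGraph.Adj.reachable ⟨hxy, by rw [hmin]; exact heq.symm⟩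
      · -- construct an intermediate codeword
        set e' := hammingDist (x : Fin n → F) (y : Fin n → F) with he'
        set D : Finset (Fin n) :=
          Finset.univ.filter (fun i => (x : Fin n → F) i ≠ (y : Fin n → F) i) with hDdef
        have hDcard : D.card = e' := rfl
        have hDn : e' ≤ n := by
          rw [← hDcard]
          simpa using Finset.card_le_card (Finset.subset_univ D)
        have hDne : D.Nonempty := by
          rw [← Finset.card_pos, hDcard]; omega
        obtain ⟨c, hc⟩ := hDne
        have hcd : (x : Fin n → F) c ≠ (y : Fin n → F) c := by
          rw [hDdef] at hc; exact (Finset.mem_filter.mp hc).2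
        obtain ⟨B, hBsub, hBcard⟩ := Finset.exists_subset_card_eq (s := D.erase c) (n := e' - d)
          (by rw [Finset.card_erase_of_mem hc, hDcard]; omega)
        have hBD : B ⊆ D := hBsub.trans (Finset.erase_subset c D)
        have hcB : c ∉ B := fun h' => (Finset.mem_erase.mp (hBsub h')).1 rfl
        have hBDc : Disjoint B Dᶜ := by
          rw [Finset.disjoint_left]
          intro a ha hac
          exact (Finset.mem_compl.mp hac) (hBD ha)
        have hcDcB : c ∉ Dᶜ ∪ B := by
          simp only [Finset.mem_union, Finset.mem_compl, not_or, not_not]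
          exact ⟨hc, hcB⟩
        set S : Finset (Fin n) := insert c (Dᶜ ∪ B) with hSdef
        have hScard : S.card = n - d + 1 := by
          rw [hSdef, Finset.card_insert_of_notMem hcDcB,
            Finset.card_union_of_disjoint hBDc.symm, Finset.card_compl,
            Fintype.card_fin, hDcard, hBcard]
          omega
        set v : Fin n → F := fun i => if i ∈ B then (y : Fin n → F) i else (x : Fin n → F) i
          with hvdef
        obtain ⟨z, hzC, hz⟩ := exists_codeword_matching hd hdn hmin hMDS hScard v
        -- facts about z
        have hzc : z c = (x : Fin n → F) c := by
          have := hz c (Finset.mem_insert_self _ _)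
          simpa only [hvdef, if_neg hcB] using this
        have hzDc : ∀ i ∈ Dᶜ, z i = (x : Fin n → F) i := by
          intro i hi
          have hiB : i ∉ B := fun h' => (Finset.mem_compl.mp hi) (hBD h')
          have := hz i (Finset.mem_insert_of_mem (Finset.mem_union_left _ hi))
          simpa only [hvdef, if_neg hiB] using this
        have hxyDc : ∀ i ∈ Dᶜ, (x : Fin n → F) i = (y : Fin n → F) i := by
          intro i hi
          have := Finset.mem_compl.mp hi
          rw [hDdef] at this
          simpa using this
        have hzB : ∀ i ∈ B, z i = (y : Fin n → F) i := by
          intro i hi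
          have := hz i (Finset.mem_insert_of_mem (Finset.mem_union_right _ hi))
          simpa only [hvdef, if_pos hi] using this
        have hzy : z ≠ (y : Fin n → F) := by
          intro h'
          exact hcd (hzc ▸ h' ▸ rfl)
        -- distance from z to y is exactly d
        have hagree_zy : ∀ i ∈ Dᶜ ∪ B, z i = (y : Fin n → F) i := by
          intro i hi
          rcases Finset.mem_union.mp hi with hi' | hi'
          · rw [hzDc i hi', hxyDc i hi']
          · exact hzB i hi'
        have hzy_le : hammingDist z (y : Fin n → F) ≤ d := by
          have := hammingDist_le_of_agree hagree_zy
          rwa [Finset.card_union_of_disjoint hBDc.symm, Finset.card_compl,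
            Fintype.card_fin, hDcard, hBcard, show n - e' + (e' - d) = n - d by omega,
            show n - (n - d) = d by omega] at this
        have hzy_ge : d ≤ hammingDist z (y : Fin n → F) :=
          hmin ▸ minDist_le_hammingDist hzC y.2 hzy
        have hzy_eq : hammingDist z (y : Fin n → F) = d := le_antisymm hzy_le hzy_ge
        -- distance from x to z is at most e
        have hagree_xz : ∀ i ∈ insert c Dᶜ, (x : Fin n → F) i = z i := by
          intro i hi
          rcases Finset.mem_insert.mp hi with rfl | hi'
          · exact hzc.symm
          · exact (hzDc i hi').symm
        have hcDc : c ∉ Dᶜ := fun h' => (Finset.mem_compl.mp h') hc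
        have hxz_le : hammingDist (x : Fin n → F) z ≤ e := by
          have := hammingDist_le_of_agree hagree_xz
          rw [Finset.card_insert_of_notMem hcDc, Finset.card_compl,
            Fintype.card_fin, hDcard] at this
          omega
        have hreach₁ : (mdGraph C).Reachable x ⟨z, hzC⟩ := ih x ⟨z, hzC⟩ hxz_le
        have hadj : (mdGraph C).Adj ⟨z, hzC⟩ y := by
          refine ⟨fun h' => hzy (congrArg Subtype.val h'), ?_⟩
          rw [hmin]; exact hzy_eq
        exact hreach₁.trans hadj.reachable
  haveI := hne
  exact ⟨fun u v => key _ u v le_rfl⟩
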